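/- For integers d, q ≥ 2, a finite simple graph G is q^d-colorable if and only if G is q-locatable in ℤ^d. -/

import Mathlib

open SimpleGraph

/-- Cast an integer grid point to a real point. -/
def castPt {d : ℕ} (p : Fin d → ℤ) : Fin d → ℝ := fun i => (p i : ℝ)

/-- The grid points lying on the closed segment in `ℝ^d` joining `a` and `b`. -/
def segGridPts {d : ℕ} (a b : Fin d → ℤ) : Set (Fin d → ℤ) :=
  {p | castPt p ∈ segment ℝ (castPt a) (castPt b)}

/-- `φ` is a grid drawing of `G` in `ℤ^d`: it is injective and no vertex image other than the
endpoints lies on the closed segment representing an edge. -/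
def IsGridDrawing {V : Type*} {d : ℕ} (G : SimpleGraph V) (φ : V → Fin d → ℤ) : Prop :=
  Function.Injective φ ∧
    ∀ u v w : V, G.Adj u v →
      castPt (φ w) ∈ segment ℝ (castPt (φ u)) (castPt (φ v)) → w = u ∨ w = v

/-- `G` is `q`-locatable in `ℤ^d`: it has a grid drawing in which every edge segment contains
at most `q` grid points. -/
def IsQLocatable {V : Type*} (G : SimpleGraph V) (d q : ℕ) : Prop :=
  ∃ φ : V → Fin d → ℤ, IsGridDrawing G φ ∧
    ∀ u v : V, G.Adj u v → (segGridPts (φ u) (φ v)).ncard ≤ q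

/-- A primitive grid drawing: every edge segment contains exactly its two endpoints
as grid points. -/
def IsPrimitiveDrawing {V : Type*} {d : ℕ} (G : SimpleGraph V) (φ : V → Fin d → ℤ) : Prop :=
  IsGridDrawing G φ ∧ ∀ u v : V, G.Adj u v → segGridPts (φ u) (φ v) = {φ u, φ v}

/-- `G` is locatable in `ℤ^d`: it has a primitive grid drawing in `ℤ^d`. -/
def IsLocatable {V : Type*} (G : SimpleGraph V) (d : ℕ) : Prop :=
  ∃ φ : V → Fin d → ℤ, IsPrimitiveDrawing G φ

/-- The rank of a grid point in `ℤ^d`: the tuple of its first `d - 1` coordinates. -/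
def rank {d : ℕ} (p : Fin d → ℤ) : Fin (d - 1) → ℤ :=
  fun i => p (Fin.castLE (Nat.sub_le d 1) i)

/-- `G` is embeddable on `l` columns: it has a grid drawing in `ℤ²` in which the first
coordinates of the vertex images take at most `l` distinct values. -/
def EmbeddableOnCols {V : Type*} (G : SimpleGraph V) (l : ℕ) : Prop :=
  ∃ φ : V → Fin 2 → ℤ, IsGridDrawing G φ ∧ (Set.range fun v => φ v 0).ncard ≤ l

/-- `G` can be located on `l` columns in `ℤ^d`: it has a primitive grid drawing in `ℤ^d`
using at most `l` columns. -/
def LocatableOnCols {V : Type*} (G : SimpleGraph V) (d l : ℕ) : Prop :=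
  ∃ φ : V → Fin d → ℤ, IsPrimitiveDrawing G φ ∧ (Set.range fun v => rank (φ v)).ncard ≤ l

/-- A linear forest: an acyclic graph with maximum degree at most two
(i.e. a disjoint union of paths). -/
def IsLinearForest {W : Type*} (H : SimpleGraph W) : Prop :=
  H.IsAcyclic ∧ ∀ v : W, {w | H.Adj v w}.ncard ≤ 2


set_option maxHeartbeats 1600000
section LocAux

variable {d : ℕ}


variable {d : ℕ}

lemma mem_segment_iff_param {a b p : Fin d → ℝ} :
    p ∈ segment ℝ a b ↔ ∃ t : ℝ, 0 ≤ t ∧ t ≤ 1 ∧ ∀ i, p i = a i + t * (b i - a i) := by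
  rw [segment_eq_image' ℝ a b]
  constructor
  · rintro ⟨t, ⟨ht0, ht1⟩, rfl⟩
    exact ⟨t, ht0, ht1, fun i => by simp [mul_comm]⟩
  · rintro ⟨t, ht0, ht1, h⟩
    refine ⟨t, ⟨ht0, ht1⟩, ?_⟩
    funext i
    simp [h i, mul_comm]

lemma mem_segGridPts_iff {a b p : Fin d → ℤ} :
    p ∈ segGridPts a b ↔ ∃ t : ℝ, 0 ≤ t ∧ t ≤ 1 ∧
      ∀ i, (p i : ℝ) = (a i : ℝ) + t * ((b i : ℝ) - (a i : ℝ)) := by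
  unfold segGridPts castPt
  rw [Set.mem_setOf_eq, mem_segment_iff_param]

lemma segGridPts_finite (a b : Fin d → ℤ) : (segGridPts a b).Finite := by
  apply Set.Finite.subset
    (Set.Finite.pi (t := fun i => Set.Icc (min (a i) (b i)) (max (a i) (b i)))
      (fun i => Set.finite_Icc _ _))
  intro p hp
  obtain ⟨t, ht0, ht1, h⟩ := mem_segGridPts_iff.mp hp
  intro i _
  simp only [Set.mem_Icc]
  constructor
  · have : ((min (a i) (b i) : ℤ) : ℝ) ≤ (p i : ℝ) := by
      rw [Int.cast_min, h i]
      rcases le_total ((a i : ℝ)) ((b i : ℝ)) with hab | hab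
      · nlinarith [min_le_left ((a i):ℝ) ((b i):ℝ)]
      · nlinarith [min_le_right ((a i):ℝ) ((b i):ℝ)]
    exact_mod_cast this
  · have : (p i : ℝ) ≤ ((max (a i) (b i) : ℤ) : ℝ) := by
      rw [Int.cast_max, h i]
      rcases le_total ((a i : ℝ)) ((b i : ℝ)) with hab | hab
      · nlinarith [le_max_right ((a i):ℝ) ((b i):ℝ)]
      · nlinarith [le_max_left ((a i):ℝ) ((b i):ℝ)]
    exact_mod_cast this

/-- Lower bound: if all coordinate differences are divisible by `q` and the endpoints differ,
the segment carries at least `q + 1` grid points. -/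
lemma le_ncard_segGridPts {q : ℕ} (hq : 1 ≤ q) {a b : Fin d → ℤ} (hab : a ≠ b)
    (hdvd : ∀ i, (q : ℤ) ∣ (b i - a i)) : q + 1 ≤ (segGridPts a b).ncard := by
  set w : Fin d → ℤ := fun i => (b i - a i) / (q : ℤ) with hw
  have hqw : ∀ i, (q : ℤ) * w i = b i - a i := fun i => Int.mul_ediv_cancel' (hdvd i)
  obtain ⟨i₀, hi₀⟩ : ∃ i, w i ≠ 0 := by
    by_contra h
    push_neg at h
    apply hab
    funext i
    have := hqw i
    rw [h i, mul_zero] at this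
    omega
  have hq0 : (0:ℤ) < (q:ℤ) := by exact_mod_cast hq
  set F : ℤ → (Fin d → ℤ) := fun k => fun i => a i + k * w i with hF
  have hinj : Set.InjOn F (Set.Icc 0 (q:ℤ)) := by
    intro k1 _ k2 _ h
    have h0 := congrFun h i₀
    simp only [F] at h0
    have : k1 * w i₀ = k2 * w i₀ := by linarith
    exact mul_right_cancel₀ hi₀ this
  have hsub : F '' (Set.Icc 0 (q:ℤ)) ⊆ segGridPts a b := by
    rintro _ ⟨k, ⟨hk0, hkq⟩, rfl⟩
    rw [mem_segGridPts_iff]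
    refine ⟨(k : ℝ) / (q : ℝ), by positivity, ?_, ?_⟩
    · rw [div_le_one (by exact_mod_cast hq0)]
      exact_mod_cast hkq
    · intro i
      have hbi : ((b i : ℝ) - (a i : ℝ)) = (q : ℝ) * (w i : ℝ) := by
        exact_mod_cast (hqw i).symm
      simp only [F]
      rw [hbi]
      have hqne : (q:ℝ) ≠ 0 := by positivity
      push_cast
      field_simp
  have hcard : (F '' (Set.Icc 0 (q:ℤ))).ncard = q + 1 := by
    rw [Set.ncard_image_of_injOn hinj, ← Finset.coe_Icc, Set.ncard_coe_finset, Int.card_Icc]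
    omega
  calc (q:ℕ) + 1 = (F '' (Set.Icc 0 (q:ℤ))).ncard := hcard.symm
    _ ≤ (segGridPts a b).ncard := Set.ncard_le_ncard hsub (segGridPts_finite a b)


/-- Upper bound for the number of grid points on a segment in terms of the gcd of the
coordinate differences. -/
lemma ncard_segGridPts_le {a b : Fin d → ℤ} (hab : a ≠ b) :
    (segGridPts a b).ncard ≤ (Finset.gcd Finset.univ (fun i => (b i - a i).natAbs)) + 1 := by
  classical
  set δ : Fin d → ℤ := fun i => b i - a i with hδ
  obtain ⟨i₀, hi₀⟩ : ∃ i, δ i ≠ 0 := by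
    by_contra h
    push_neg at h
    exact hab (funext fun i => by have := h i; simp only [δ] at this; omega)
  set g : ℕ := Finset.gcd Finset.univ (fun i => (δ i).natAbs) with hg
  have hg0 : g ≠ 0 := by
    intro h
    rw [hg, Finset.gcd_eq_zero_iff] at h
    exact hi₀ (Int.natAbs_eq_zero.mp (h i₀ (Finset.mem_univ _)))
  have hgdvd : ∀ i, (g : ℤ) ∣ δ i := by
    intro i
    have h1 : g ∣ (δ i).natAbs := Finset.gcd_dvd (Finset.mem_univ i)
    exact dvd_trans (Int.natCast_dvd_natCast.mpr h1) (Int.natAbs_dvd.mpr dvd_rfl)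
  set δ' : Fin d → ℤ := fun i => δ i / (g : ℤ) with hδ'
  have hgδ' : ∀ i, (g : ℤ) * δ' i = δ i := fun i => Int.mul_ediv_cancel' (hgdvd i)
  have hδ'i₀ : δ' i₀ ≠ 0 := by
    intro h
    apply hi₀
    rw [← hgδ' i₀, h, mul_zero]
  -- gcd of δ' is 1
  have hG' : Finset.gcd Finset.univ (fun i => (δ' i).natAbs) = 1 := by
    have h1 : ∀ i : Fin d, (δ i).natAbs = g * (δ' i).natAbs := by
      intro i
      rw [← hgδ' i, Int.natAbs_mul, Int.natAbs_natCast]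
    have h2 : g = g * Finset.gcd Finset.univ (fun i => (δ' i).natAbs) := by
      conv_lhs => rw [hg]
      rw [show (fun i : Fin d => (δ i).natAbs) = (fun i => g * (δ' i).natAbs) from funext h1]
      rw [Finset.gcd_mul_left]
      simp
    nth_rewrite 1 [show g = g * 1 by ring] at h2
    exact (Nat.eq_of_mul_eq_mul_left (Nat.pos_of_ne_zero hg0) h2.symm)
  -- the parametrizing map
  set F : ℤ → (Fin d → ℤ) := fun k => fun i => a i + k * δ' i with hF
  have hsub : segGridPts a b ⊆ F '' (Set.Icc 0 (g : ℤ)) := by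
    intro p hp
    obtain ⟨t, ht0, ht1, hco⟩ := mem_segGridPts_iff.mp hp
    set z : Fin d → ℤ := fun i => p i - a i with hz
    have hzr : ∀ i, (z i : ℝ) = t * (δ i : ℝ) := by
      intro i
      have := hco i
      simp only [z, δ]
      push_cast
      rw [this]
      ring
    have hcross : ∀ i, z i * δ i₀ = z i₀ * δ i := by
      intro i
      have : ((z i * δ i₀ : ℤ) : ℝ) = ((z i₀ * δ i : ℤ) : ℝ) := by
        push_cast
        rw [hzr i, hzr i₀]
        ring
      exact_mod_cast this
    have hcross' : ∀ i, z i * δ' i₀ = z i₀ * δ' i := by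
      intro i
      have h1 : (g : ℤ) * (z i * δ' i₀) = (g:ℤ) * (z i₀ * δ' i) := by
        calc (g : ℤ) * (z i * δ' i₀) = z i * ((g:ℤ) * δ' i₀) := by ring
        _ = z i * δ i₀ := by rw [hgδ' i₀]
        _ = z i₀ * δ i := hcross i
        _ = z i₀ * ((g:ℤ) * δ' i) := by rw [hgδ' i]
        _ = (g:ℤ) * (z i₀ * δ' i) := by ring
      exact mul_left_cancel₀ (by exact_mod_cast hg0) h1
    -- δ' i₀ divides z i₀
    have hdvd0 : δ' i₀ ∣ z i₀ := by
      have hD : ∀ i, (δ' i₀).natAbs ∣ (z i₀).natAbs * (δ' i).natAbs := by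
        intro i
        have : δ' i₀ ∣ z i₀ * δ' i := ⟨z i, by rw [← hcross' i]; ring⟩
        rw [← Int.natAbs_mul]
        exact Int.natAbs_dvd_natAbs.mpr this
      have hDg : (δ' i₀).natAbs ∣
          Finset.gcd Finset.univ (fun i => (z i₀).natAbs * (δ' i).natAbs) :=
        Finset.dvd_gcd (fun i _ => hD i)
      rw [Finset.gcd_mul_left, hG'] at hDg
      simpa using hDg
    obtain ⟨k, hk⟩ := hdvd0
    have hzk : ∀ i, z i = k * δ' i := by
      intro i
      have h1 : z i * δ' i₀ = (k * δ' i) * δ' i₀ := by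
        rw [hcross' i, hk]
        ring
      exact mul_right_cancel₀ hδ'i₀ h1
    -- k is in range
    have hkt : (k : ℝ) = t * g := by
      have hδ'r : ((δ' i₀ : ℤ) : ℝ) ≠ 0 := by exact_mod_cast hδ'i₀
      have h2 := hzr i₀
      rw [hk, ← hgδ' i₀] at h2
      push_cast at h2
      have h1 : ((k : ℝ)) * ((δ' i₀ : ℤ):ℝ) = (t * g) * ((δ' i₀:ℤ):ℝ) := by
        linear_combination h2
      exact mul_right_cancel₀ hδ'r h1
    refine ⟨k, ⟨?_, ?_⟩, ?_⟩
    · have : (0:ℝ) ≤ (k:ℝ) := by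
        rw [hkt]; positivity
      exact_mod_cast this
    · have hgpos : (0:ℝ) < (g:ℝ) := by exact_mod_cast Nat.pos_of_ne_zero hg0
      have : (k:ℝ) ≤ (g:ℝ) := by rw [hkt]; nlinarith
      exact_mod_cast this
    · funext i
      have := hzk i
      simp only [F, z] at this ⊢
      omega
  calc (segGridPts a b).ncard ≤ (F '' (Set.Icc 0 (g:ℤ))).ncard :=
        Set.ncard_le_ncard hsub (Set.Finite.image _ (Set.finite_Icc _ _))
    _ ≤ (Set.Icc 0 (g:ℤ)).ncard := Set.ncard_image_le (Set.finite_Icc _ _)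
    _ = g + 1 := by
        rw [← Finset.coe_Icc, Set.ncard_coe_finset, Int.card_Icc]
        omega

/-- If every prime power dividing `gg` divides `e ≠ 0`, then `gg ∣ e`. -/
lemma int_dvd_of_prime_pow_dvd {gg e : ℤ} (he : e ≠ 0)
    (h : ∀ p : ℕ, p.Prime → ∀ m : ℕ, (p : ℤ) ^ m ∣ gg → (p : ℤ) ^ m ∣ e) : gg ∣ e := by
  set G := gg.natAbs with hG
  set E := e.natAbs with hE
  have hEne : E ≠ 0 := by simpa [hE] using he
  have hnat : ∀ p : ℕ, p.Prime → ∀ m : ℕ, p ^ m ∣ G → p ^ m ∣ E := by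
    intro p hp m hdvd
    have h1 : (p:ℤ)^m ∣ gg := by
      have : ((p^m : ℕ) : ℤ) ∣ (G : ℤ) := Int.natCast_dvd_natCast.mpr hdvd
      push_cast at this
      exact this.trans (Int.natAbs_dvd.mpr dvd_rfl)
    have h2 := h p hp m h1
    have h3 : (p:ℤ)^m ∣ (E : ℤ) := (Int.dvd_natAbs.mpr h2)
    exact_mod_cast h3
  have hGne : G ≠ 0 := by
    intro hzero
    have h2 := hnat 2 Nat.prime_two E (by rw [hzero]; exact dvd_zero _)
    have := Nat.le_of_dvd (Nat.pos_of_ne_zero hEne) h2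
    have := Nat.lt_two_pow_self (n := E)
    omega
  have hfac : G.factorization ≤ E.factorization := by
    rw [Finsupp.le_def]
    intro p
    by_cases hp : p.Prime
    · have h1 : p ^ G.factorization p ∣ G := Nat.ordProj_dvd G p
      have h2 := hnat p hp _ h1
      exact (hp.pow_dvd_iff_le_factorization hEne).mp h2
    · rw [Nat.factorization_eq_zero_of_not_prime G hp]
      exact Nat.zero_le _
  have hGE : G ∣ E := (Nat.factorization_le_iff_dvd hGne hEne).mp hfac
  have hcast : (G:ℤ) ∣ (E:ℤ) := Int.natCast_dvd_natCast.mpr hGE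
  exact (Int.dvd_natAbs.mpr dvd_rfl).trans (hcast.trans (Int.natAbs_dvd.mpr dvd_rfl))

/-- An integer of the form `e + T * t` with `|e| < T` and `t ≠ 0` is nonzero. -/
lemma ne_zero_of_big {T e t : ℤ} (hT : |e| < T) (ht : t ≠ 0) : e + T * t ≠ 0 := by
  intro h
  have h1 : T * t = -e := by linarith
  have h2 : |T| * |t| = |e| := by rw [← abs_mul, h1, abs_neg]
  have hT0 : 0 < T := lt_of_le_of_lt (abs_nonneg e) hT
  have ht1 : 1 ≤ |t| := Int.one_le_abs ht
  nlinarith [abs_nonneg t, abs_nonneg e, le_abs_self T, abs_of_pos hT0]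

/-- Key arithmetic lemma: under the divisibility structure of the construction,
the gcd of the edge vector divides the (small, nonzero) color difference. -/
lemma key_dvd (qn Bq : ℕ) (T gg e μ W : ℤ)
    (hTp : ∀ p : ℕ, p.Prime → p ≤ Bq → (p : ℤ) ^ qn ∣ T)
    (he : e ≠ 0) (heB : e.natAbs < 2 ^ qn)
    (hW : W ≠ 0) (hWB : W.natAbs < Bq)
    (hgΔ : gg ∣ e + T * μ) (hgW : gg ∣ W) : gg ∣ e := by
  apply int_dvd_of_prime_pow_dvd he
  intro p hp m hpm
  by_cases hpB : p ≤ Bq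
  · by_cases hmT : (p : ℤ) ^ m ∣ T
    · have h1 : (p : ℤ) ^ m ∣ e + T * μ := hpm.trans hgΔ
      exact (Int.dvd_add_right (hmT.mul_right μ)).mp (by rwa [add_comm] at h1)
    · have hqm : qn < m := by
        by_contra hle
        push_neg at hle
        exact hmT ((pow_dvd_pow _ hle).trans (hTp p hp hpB))
      exfalso
      have hq1 : (p : ℤ) ^ qn ∣ gg := (pow_dvd_pow _ hqm.le).trans hpm
      have h3 : (p : ℤ) ^ qn ∣ e + T * μ := hq1.trans hgΔ
      have h4 : (p : ℤ) ^ qn ∣ T * μ := (hTp p hp hpB).mul_right μ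
      have h2 : (p : ℤ) ^ qn ∣ e := (Int.dvd_add_right h4).mp (by rwa [add_comm] at h3)
      have h5 : (p : ℤ) ^ qn ≤ |e| :=
        Int.le_of_dvd (abs_pos.mpr he) ((dvd_abs _ _).mpr h2)
      have h6 : (2 : ℤ) ^ qn ≤ (p : ℤ) ^ qn := by
        apply pow_le_pow_left₀ (by norm_num)
        exact_mod_cast hp.two_le
      have h7 : |e| = (e.natAbs : ℤ) := Int.abs_eq_natAbs e
      have h8 : (e.natAbs : ℤ) < (2:ℤ) ^ qn := by exact_mod_cast heB
      omega
  · rcases Nat.eq_zero_or_pos m with rfl | hm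
    · simpa using one_dvd e
    · exfalso
      have hpdvd : (p : ℤ) ∣ gg := (dvd_pow_self (p:ℤ) hm.ne').trans hpm
      have h5 : (p : ℤ) ≤ |W| :=
        Int.le_of_dvd (abs_pos.mpr hW) ((dvd_abs _ _).mpr (hpdvd.trans hgW))
      have h7 : |W| = (W.natAbs : ℤ) := Int.abs_eq_natAbs W
      have : (Bq : ℤ) < (p : ℤ) := by exact_mod_cast Nat.lt_of_not_le hpB
      omega

/-- Non-collinearity of three construction points (on the (0,1)-coordinate plane). -/
lemma minor_ne_zero (T A qz x y z e0v e1v e0w e1w : ℤ)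
    (hq : 1 ≤ qz) (hA : 1 ≤ A)
    (hx : 0 ≤ x) (hxA : x ≤ A) (hy : 0 ≤ y) (hyA : y ≤ A) (hz : 0 ≤ z) (hzA : z ≤ A)
    (hxy : x ≠ y) (hxz : x ≠ z) (hyz : y ≠ z)
    (he0v : |e0v| ≤ qz) (he1v : |e1v| ≤ qz) (he0w : |e0w| ≤ qz) (he1w : |e1w| ≤ qz)
    (hT : 2*qz*A^2 + 2*qz*A + 2*qz^2 + 1 ≤ T) :
    (e0v + T*(y-x)) * (e1w + T*(z^2-x^2)) - (e1v + T*(y^2-x^2)) * (e0w + T*(z-x)) ≠ 0 := by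
  intro hM
  set C0 : ℤ := e0v * e1w - e1v * e0w with hC0
  set C1 : ℤ := e0v*(z^2-x^2) + (y-x)*e1w - e1v*(z-x) - (y^2-x^2)*e0w with hC1
  set C2 : ℤ := (y-x)*(z-x)*(z-y) with hC2
  have hMeq : C0 + T*C1 + T*T*C2 = 0 := by
    rw [hC0, hC1, hC2, ← hM]; ring
  have hC2ne : C2 ≠ 0 := by
    rw [hC2]
    exact mul_ne_zero (mul_ne_zero (sub_ne_zero.mpr (Ne.symm hxy)) (sub_ne_zero.mpr (Ne.symm hxz)))
      (sub_ne_zero.mpr (Ne.symm hyz))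
  have hC2abs : 1 ≤ |C2| := Int.one_le_abs hC2ne
  have habsq : ∀ u v : ℤ, 0 ≤ u → u ≤ A → 0 ≤ v → v ≤ A → |v^2 - u^2| ≤ A^2 := by
    intro u v hu huA hv hvA
    have h1 : v^2 ≤ A^2 := pow_le_pow_left₀ hv hvA 2
    have h2 : u^2 ≤ A^2 := pow_le_pow_left₀ hu huA 2
    have h3 := sq_nonneg u
    have h4 := sq_nonneg v
    rw [abs_le]
    constructor <;> linarith
  have habs1 : ∀ u v : ℤ, 0 ≤ u → u ≤ A → 0 ≤ v → v ≤ A → |v - u| ≤ A := by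
    intro u v hu huA hv hvA
    rw [abs_le]
    constructor <;> linarith
  have hC1abs : |C1| ≤ 2*qz*A^2 + 2*qz*A := by
    have h1 : |e0v*(z^2-x^2)| ≤ qz * A^2 := by
      rw [abs_mul]
      exact mul_le_mul he0v (habsq x z hx hxA hz hzA) (abs_nonneg _) (le_trans (abs_nonneg _) he0v)
    have h2 : |(y-x)*e1w| ≤ A * qz := by
      rw [abs_mul]
      exact mul_le_mul (habs1 x y hx hxA hy hyA) he1w (abs_nonneg _) (by linarith)
    have h3 : |e1v*(z-x)| ≤ qz * A := by
      rw [abs_mul]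
      exact mul_le_mul he1v (habs1 x z hx hxA hz hzA) (abs_nonneg _) (le_trans (abs_nonneg _) he1v)
    have h4 : |(y^2-x^2)*e0w| ≤ A^2 * qz := by
      rw [abs_mul]
      exact mul_le_mul (habsq x y hx hxA hy hyA) he0w (abs_nonneg _) (by positivity)
    calc |C1| ≤ |e0v*(z^2-x^2)| + |(y-x)*e1w| + |e1v*(z-x)| + |(y^2-x^2)*e0w| := by
          rw [hC1]
          calc |e0v*(z^2-x^2) + (y-x)*e1w - e1v*(z-x) - (y^2-x^2)*e0w|
              ≤ |e0v*(z^2-x^2) + (y-x)*e1w - e1v*(z-x)| + |(y^2-x^2)*e0w| := abs_sub _ _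
            _ ≤ |e0v*(z^2-x^2) + (y-x)*e1w| + |e1v*(z-x)| + |(y^2-x^2)*e0w| := by
                have := abs_sub (e0v*(z^2-x^2) + (y-x)*e1w) (e1v*(z-x))
                linarith
            _ ≤ |e0v*(z^2-x^2)| + |(y-x)*e1w| + |e1v*(z-x)| + |(y^2-x^2)*e0w| := by
                have := abs_add_le (e0v*(z^2-x^2)) ((y-x)*e1w)
                linarith
      _ ≤ 2*qz*A^2 + 2*qz*A := by linarith
  have hC0abs : |C0| ≤ 2*qz^2 := by
    have h1 : |e0v*e1w| ≤ qz * qz := by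
      rw [abs_mul]
      exact mul_le_mul he0v he1w (abs_nonneg _) (le_trans (abs_nonneg _) he0v)
    have h2 : |e1v*e0w| ≤ qz * qz := by
      rw [abs_mul]
      exact mul_le_mul he1v he0w (abs_nonneg _) (le_trans (abs_nonneg _) he1v)
    calc |C0| ≤ |e0v*e1w| + |e1v*e0w| := abs_sub _ _
      _ ≤ 2*qz^2 := by nlinarith
  -- T*T*|C2| ≤ |C0| + T*|C1|
  have hTpos : 0 < T := by nlinarith
  have hfin : T*T*|C2| = |C0 + T*C1| := by
    have : T*T*C2 = -(C0 + T*C1) := by linarith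
    have habs : |T*T*C2| = T*T*|C2| := by
      rw [abs_mul (T*T) C2, abs_mul T T, abs_of_pos hTpos]
    calc T*T*|C2| = |T*T*C2| := habs.symm
      _ = |C0 + T*C1| := by rw [this, abs_neg]
  have hub : |C0 + T*C1| ≤ |C0| + T*|C1| := by
    calc |C0 + T*C1| ≤ |C0| + |T*C1| := abs_add_le _ _
      _ = |C0| + T*|C1| := by rw [abs_mul T C1, abs_of_pos hTpos]
  nlinarith [hC1abs, hC0abs, hC2abs, abs_nonneg C1, abs_nonneg C0]


private lemma backward_loc {V : Type*} [Fintype V] (G : SimpleGraph V)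
    (d q : ℕ) (hd : 2 ≤ d) (hq : 2 ≤ q) (h : IsQLocatable G d q) :
    G.Colorable (q ^ d) := by
  classical
  haveI : NeZero q := ⟨by omega⟩
  obtain ⟨φ, ⟨hinj, -⟩, hcount⟩ := h
  have hvalid : ∀ {u v : V}, G.Adj u v →
      (fun i : Fin d => ((φ u i : ZMod q))) ≠ (fun i => ((φ v i : ZMod q))) := by
    intro u v hadj heq
    have hne : φ u ≠ φ v := fun hc => (G.ne_of_adj hadj) (hinj hc)
    have hdvd : ∀ i, (q : ℤ) ∣ (φ v i - φ u i) := by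
      intro i
      have h1 : ((φ u i : ZMod q)) = ((φ v i : ZMod q)) := congrFun heq i
      rw [ZMod.intCast_eq_intCast_iff] at h1
      exact h1.dvd
    have := le_ncard_segGridPts (d := d) (q := q) (by omega) hne hdvd
    have := hcount u v hadj
    omega
  have C : G.Coloring (Fin d → ZMod q) := SimpleGraph.Coloring.mk _ (fun h => hvalid h)
  have hcard : Fintype.card (Fin d → ZMod q) = q ^ d := by
    rw [Fintype.card_fun, ZMod.card, Fintype.card_fin]
  exact hcard ▸ C.colorable


private lemma forward_loc {V : Type*} [Fintype V] (G : SimpleGraph V)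
    (d q : ℕ) (hd : 2 ≤ d) (hq : 2 ≤ q) (hcol : G.Colorable (q ^ d)) :
    IsQLocatable G d q := by
  classical
  obtain ⟨C⟩ := hcol
  set n := Fintype.card V with hn
  set σ : V ≃ Fin n := Fintype.equivFin V with hσ
  set EE : Fin (q ^ d) ≃ (Fin d → Fin q) := Fintype.equivOfCardEq (by simp) with hEE
  set c : V → Fin d → Fin q := fun v => EE (C v) with hc
  have hcprop : ∀ {u v : V}, G.Adj u v → c u ≠ c v := by
    intro u v hadj h
    rw [hc] at h
    exact C.valid hadj (EE.injective h)
  set A : ℕ := q * (n + 1) with hA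
  set Bq : ℕ := 2 * A * q + q + 2 with hBq
  set M₀ : ℕ := 2 * q * A ^ 2 + 2 * q * A + 2 * q ^ 2 + 1 with hM₀
  set T : ℤ := ((Bq.factorial ^ q * M₀ : ℕ) : ℤ) with hT
  set a : V → ℤ := fun v => (q : ℤ) * ((σ v : ℕ) + 1) with ha
  set i0 : Fin d := ⟨0, by omega⟩ with hi0
  set i1 : Fin d := ⟨1, by omega⟩ with hi1
  set μ : V → Fin d → ℤ :=
    fun v i => if i.val = 0 then a v else if i.val = 1 then (a v) ^ 2 else 0 with hμ
  set φ : V → Fin d → ℤ := fun v i => ((c v i : ℕ) : ℤ) + T * μ v i with hφ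
  set E : V → V → Fin d → ℤ :=
    fun u v i => ((c v i : ℕ) : ℤ) - ((c u i : ℕ) : ℤ) with hE
  -- basic numeric facts
  have hA1 : 1 ≤ A := by rw [hA]; nlinarith
  have hM₀q : q ≤ M₀ := by rw [hM₀]; nlinarith
  have hTM₀ : (M₀ : ℤ) ≤ T := by
    rw [hT]
    have h1 : M₀ ≤ (Bq.factorial) ^ q * M₀ :=
      Nat.le_mul_of_pos_left M₀ (pow_pos (Nat.factorial_pos _) q)
    exact_mod_cast h1
  have hTq : (q : ℤ) - 1 < T := by
    have : (q : ℤ) ≤ (M₀ : ℤ) := by exact_mod_cast hM₀q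
    omega
  have hTpos : (0:ℤ) < T := by
    have : (1:ℤ) ≤ q := by exact_mod_cast (by omega : 1 ≤ q)
    omega
  have hTp : ∀ p : ℕ, p.Prime → p ≤ Bq → (p : ℤ) ^ q ∣ T := by
    intro p hp hpB
    rw [hT]
    have h1 : p ∣ Bq.factorial := Nat.dvd_factorial hp.pos hpB
    have h2 : p ^ q ∣ (Bq.factorial) ^ q := pow_dvd_pow_of_dvd h1 q
    have h3 : p ^ q ∣ (Bq.factorial) ^ q * M₀ := h2.mul_right M₀
    exact_mod_cast Int.natCast_dvd_natCast.mpr h3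
  -- facts about a
  have ha0 : ∀ v, 0 ≤ a v := by
    intro v; simp only [ha]; positivity
  have haq : ∀ v, (q : ℤ) ≤ a v := by
    intro v
    simp only [ha]
    have h1 : (0:ℤ) ≤ ((σ v : ℕ) : ℤ) := by positivity
    have h2 : (0:ℤ) < (q:ℤ) := by exact_mod_cast (by omega : 0 < q)
    nlinarith
  have haA : ∀ v, a v ≤ (A : ℤ) := by
    intro v
    simp only [ha, hA]
    have h1 : ((σ v : ℕ) : ℤ) + 1 ≤ (n : ℤ) + 1 := by
      have := (σ v).isLt
      omega
    have h2 : (0:ℤ) ≤ (q:ℤ) := by positivity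
    push_cast
    nlinarith
  have hainj : ∀ u v : V, u ≠ v → a u ≠ a v := by
    intro u v huv hav
    simp only [ha] at hav
    have hq0 : (q:ℤ) ≠ 0 := by exact_mod_cast (by omega : q ≠ 0)
    have h1 : ((σ u : ℕ) : ℤ) = ((σ v : ℕ) : ℤ) := by
      have := mul_left_cancel₀ hq0 hav
      omega
    have h2 : σ u = σ v := Fin.ext (by exact_mod_cast h1)
    exact huv (σ.injective h2)
  -- coordinate bridges
  have hμ0 : ∀ v, μ v i0 = a v := by intro v; simp [hμ, hi0]
  have hμ1 : ∀ v, μ v i1 = (a v) ^ 2 := by intro v; simp [hμ, hi1]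
  have hδ0 : ∀ u v : V, φ v i0 - φ u i0 = E u v i0 + T * (a v - a u) := by
    intro u v
    simp only [hφ, hE]
    rw [hμ0, hμ0]
    ring
  have hδ1 : ∀ u v : V, φ v i1 - φ u i1 = E u v i1 + T * ((a v)^2 - (a u)^2) := by
    intro u v
    simp only [hφ, hE]
    rw [hμ1, hμ1]
    ring
  have hEabs : ∀ u v : V, ∀ i, |E u v i| ≤ (q : ℤ) - 1 := by
    intro u v i
    simp only [hE]
    have h1 : (c v i : ℕ) < q := (c v i).isLt
    have h2 : (c u i : ℕ) < q := (c u i).isLt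
    rw [abs_le]
    constructor <;> [skip; skip] <;> push_cast <;> omega
  -- injectivity
  have hφinj : Function.Injective φ := by
    intro u v h
    by_contra hne
    have h0 : φ v i0 - φ u i0 = 0 := by rw [h]; ring
    rw [hδ0] at h0
    exact ne_zero_of_big (lt_of_le_of_lt (hEabs u v i0) hTq)
      (sub_ne_zero.mpr (hainj v u (Ne.symm hne))) h0
  -- non-collinearity
  have hminor : ∀ u v w : V, u ≠ v → u ≠ w → v ≠ w →
      (φ v i0 - φ u i0) * (φ w i1 - φ u i1) -
        (φ v i1 - φ u i1) * (φ w i0 - φ u i0) ≠ 0 := by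
    intro u v w huv huw hvw
    rw [hδ0 u v, hδ1 u w, hδ1 u v, hδ0 u w]
    have hqabs : ∀ u' v' : V, ∀ i, |E u' v' i| ≤ (q:ℤ) := by
      intro u' v' i
      have := hEabs u' v' i
      omega
    apply minor_ne_zero T (A:ℤ) (q:ℤ) (a u) (a v) (a w) _ _ _ _
      (by exact_mod_cast (by omega : 1 ≤ q)) (by exact_mod_cast hA1)
      (ha0 u) (haA u) (ha0 v) (haA v) (ha0 w) (haA w)
      (hainj u v huv) (hainj u w huw) (hainj v w hvw)
      (hqabs u v i0) (hqabs u v i1) (hqabs u w i0) (hqabs u w i1)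
      (by
        have : ((M₀ : ℕ) : ℤ) = 2*(q:ℤ)*(A:ℤ)^2 + 2*(q:ℤ)*(A:ℤ) + 2*(q:ℤ)^2 + 1 := by
          rw [hM₀]; push_cast; ring
        rw [← this]
        exact hTM₀)
  -- main conclusion
  refine ⟨φ, ⟨hφinj, ?_⟩, ?_⟩
  · -- grid drawing property
    intro u v w hadj hseg
    by_contra hcon
    push_neg at hcon
    obtain ⟨hwu, hwv⟩ := hcon
    have huv : u ≠ v := G.ne_of_adj hadj
    obtain ⟨t, -, -, hco⟩ :=
      (mem_segGridPts_iff (a := φ u) (b := φ v) (p := φ w)).mp hseg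
    have hM0 : (φ v i0 - φ u i0) * (φ w i1 - φ u i1) -
        (φ v i1 - φ u i1) * (φ w i0 - φ u i0) = 0 := by
      have hr : (((φ v i0 - φ u i0) * (φ w i1 - φ u i1) -
          (φ v i1 - φ u i1) * (φ w i0 - φ u i0) : ℤ) : ℝ) = 0 := by
        push_cast
        rw [hco i0, hco i1]
        ring
      exact_mod_cast hr
    exact hminor u v w huv (Ne.symm hwu) (Ne.symm hwv) hM0
  · -- the counting property
    intro u v hadj
    have huv : u ≠ v := G.ne_of_adj hadj
    have hne : φ u ≠ φ v := fun h => huv (hφinj h)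
    refine le_trans (ncard_segGridPts_le hne) ?_
    set gg : ℕ := Finset.gcd Finset.univ (fun i => (φ v i - φ u i).natAbs) with hgg
    have hgdvd : ∀ i, (gg : ℤ) ∣ (φ v i - φ u i) := by
      intro i
      exact dvd_trans (Int.natCast_dvd_natCast.mpr (Finset.gcd_dvd (Finset.mem_univ i)))
        (Int.natAbs_dvd.mpr dvd_rfl)
    have key : ∃ e : ℤ, e ≠ 0 ∧ |e| ≤ (q : ℤ) - 1 ∧ (gg : ℤ) ∣ e := by
      by_cases h01 : E u v i0 = 0 ∧ E u v i1 = 0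
      · -- colors differ in a coordinate ≥ 2
        obtain ⟨j, hj⟩ := Function.ne_iff.mp (hcprop hadj)
        have hEj : E u v j ≠ 0 := by
          intro h
          apply hj
          simp only [hE] at h
          have : (c u j : ℕ) = (c v j : ℕ) := by omega
          exact Fin.ext this
        have hji0 : j ≠ i0 := by
          intro h; rw [h] at hEj; exact hEj h01.1
        have hji1 : j ≠ i1 := by
          intro h; rw [h] at hEj; exact hEj h01.2
        have hjv0 : j.val ≠ 0 := by
          intro h; apply hji0; rw [hi0]; exact Fin.ext h
        have hjv1 : j.val ≠ 1 := by
          intro h; apply hji1; rw [hi1]; exact Fin.ext h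
        have hμj : ∀ x, μ x j = 0 := by
          intro x; simp [hμ, hjv0, hjv1]
        have hδj : φ v j - φ u j = E u v j := by
          simp only [hφ, hE]
          rw [hμj, hμj]
          ring
        exact ⟨E u v j, hEj, hEabs u v j, hδj ▸ hgdvd j⟩
      · -- colors differ in coordinate 0 or 1
        set W : ℤ := (a v + a u) * (φ v i0 - φ u i0) - (φ v i1 - φ u i1) with hW
        have hWe : W = (a v + a u) * E u v i0 - E u v i1 := by
          rw [hW, hδ0, hδ1]; ring
        have hgW : (gg : ℤ) ∣ W := by
          rw [hW]
          exact dvd_sub ((hgdvd i0).mul_left _) (hgdvd i1)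
        have hsum : (2:ℤ) * q ≤ a v + a u := by
          have := haq u; have := haq v; omega
        have hsumA : a v + a u ≤ 2 * (A:ℤ) := by
          have := haA u; have := haA v; omega
        have hWabs : |W| ≤ 2 * (A:ℤ) * q + q := by
          rw [hWe]
          have h1 : |(a v + a u) * E u v i0| ≤ 2 * (A:ℤ) * q := by
            rw [abs_mul]
            have h2 : |a v + a u| ≤ 2 * (A:ℤ) := by
              rw [abs_of_nonneg (by linarith [ha0 u, ha0 v])]
              exact hsumA
            have h3 : |E u v i0| ≤ (q:ℤ) := by have := hEabs u v i0; omega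
            have h4 : (0:ℤ) ≤ (q:ℤ) := by positivity
            nlinarith [abs_nonneg (a v + a u), abs_nonneg (E u v i0)]
          have h5 : |E u v i1| ≤ (q:ℤ) := by have := hEabs u v i1; omega
          calc |(a v + a u) * E u v i0 - E u v i1|
              ≤ |(a v + a u) * E u v i0| + |E u v i1| := abs_sub _ _
            _ ≤ 2 * (A:ℤ) * q + q := by linarith
        have hWBq : W.natAbs < Bq := by
          have h1 : ((W.natAbs : ℤ)) ≤ 2 * (A:ℤ) * (q:ℤ) + (q:ℤ) := by
            rw [← Int.abs_eq_natAbs]; exact hWabs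
          have h2 : ((Bq:ℕ):ℤ) = 2 * (A:ℤ) * (q:ℤ) + (q:ℤ) + 2 := by
            rw [hBq]; push_cast; ring
          have h3 : ((W.natAbs : ℤ)) < ((Bq:ℕ):ℤ) := by linarith
          exact_mod_cast h3
        have heBgen : ∀ e : ℤ, |e| ≤ (q:ℤ) - 1 → e.natAbs < 2 ^ q := by
          intro e he
          have h1 : (e.natAbs : ℤ) ≤ (q:ℤ) - 1 := by rw [← Int.abs_eq_natAbs]; exact he
          have h2 : e.natAbs < q := by omega
          have h3 : q < 2 ^ q := Nat.lt_two_pow_self (n := q)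
          omega
        by_cases hE0 : E u v i0 = 0
        · have hE1 : E u v i1 ≠ 0 := by tauto
          have hWne : W ≠ 0 := by
            rw [hWe, hE0]
            simpa using hE1
          have hgΔ : (gg:ℤ) ∣ E u v i1 + T * ((a v)^2 - (a u)^2) := by
            rw [← hδ1]; exact hgdvd i1
          exact ⟨E u v i1, hE1, hEabs u v i1,
            key_dvd q Bq T gg (E u v i1) ((a v)^2 - (a u)^2) W hTp hE1
              (heBgen _ (hEabs u v i1)) hWne hWBq hgΔ hgW⟩
        · have hWne : W ≠ 0 := by
            intro h
            rw [hWe] at h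
            have h1 : (a v + a u) * E u v i0 = E u v i1 := by linarith
            have h2 : |(a v + a u) * E u v i0| = |E u v i1| := by rw [h1]
            rw [abs_mul, abs_of_nonneg (by linarith [ha0 u, ha0 v])] at h2
            have h3 : (1:ℤ) ≤ |E u v i0| := Int.one_le_abs hE0
            have h4 : |E u v i1| ≤ (q:ℤ) - 1 := hEabs u v i1
            nlinarith [abs_nonneg (E u v i0), abs_nonneg (E u v i1)]
          have hgΔ : (gg:ℤ) ∣ E u v i0 + T * (a v - a u) := by
            rw [← hδ0]; exact hgdvd i0
          exact ⟨E u v i0, hE0, hEabs u v i0,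
            key_dvd q Bq T gg (E u v i0) (a v - a u) W hTp hE0
              (heBgen _ (hEabs u v i0)) hWne hWBq hgΔ hgW⟩
    obtain ⟨e, hene, heabs, hedvd⟩ := key
    have h1 : (gg : ℤ) ≤ |e| :=
      Int.le_of_dvd (abs_pos.mpr hene) ((dvd_abs _ _).mpr hedvd)
    have h2 : (gg : ℤ) ≤ (q : ℤ) - 1 := le_trans h1 heabs
    have h3 : gg + 1 ≤ q := by omega
    exact h3


end LocAux

theorem locatable_complexity {V : Type*} [Fintype V] (G : SimpleGraph V)
    (d q : ℕ) (hd : 2 ≤ d) (hq : 2 ≤ q) :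
    G.Colorable (q ^ d) ↔ IsQLocatable G d q := by
  exact ⟨forward_loc G d q hd hq, backward_loc G d q hd hq⟩
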